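/- Let θ : A → A^λ be a primitive substitution of constant length λ ≥ 2, ~θ its synchronizing part, and Θ = θ ∨ ~θ the substitution on the alphabet overline{𝒳} = {(a, M) : M ∈ 𝒳(θ), a ∈ M} defined by Θ(a,M)_j = (θ(a)_j, ~θ(M)_j). Then Θ is primitive. Moreover, if θ(a₀)_0 = a₀ and M₀ ∈ 𝒳(θ) satisfy a₀ ∈ M₀ and ~θ(M₀)_0 = M₀ (so that Θ(a₀,M₀)_0 = (a₀,M₀)), then h(Θ) = h(θ). -/

import Mathlib

open Filter Topology

/-- `substIter θ l k a j` is the `j`-th letter of `θ^k(a)`, where `θ : A → A^l` is a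
substitution of constant length `l` (the letters of `θ(a)` being `θ a 0, …, θ a (l-1)`).
It is meaningful for `j < l ^ k` and satisfies
`θ^{k+1}(a)_{j'·l + r} = θ(θ^k(a)_{j'})_r`. -/
def substIter {A : Type*} (θ : A → ℕ → A) (l : ℕ) : ℕ → A → ℕ → A
  | 0, a, _ => a
  | k + 1, a, j => θ (substIter θ l k a (j / l)) (j % l)

/-- A substitution of constant length `l` is primitive if some iterate of every letter
contains every letter. -/
def SubstPrimitive {A : Type*} (θ : A → ℕ → A) (l : ℕ) : Prop :=
  ∃ k, 1 ≤ k ∧ ∀ a b : A, ∃ j, j < l ^ k ∧ substIter θ l k a j = b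

/-- Primitivity of a substitution restricted to a sub-alphabet `S`. -/
def SubstPrimitiveOn {A : Type*} (θ : A → ℕ → A) (l : ℕ) (S : Set A) : Prop :=
  ∃ k, 1 ≤ k ∧ ∀ a ∈ S, ∀ b ∈ S, ∃ j, j < l ^ k ∧ substIter θ l k a j = b

/-- The column number of a substitution of constant length `l`, restricted to the
sub-alphabet `S`: the minimal cardinality of a column set `{θ^k(a)_j : a ∈ S}`. -/
noncomputable def columnNumberOn {A : Type*} (θ : A → ℕ → A) (l : ℕ) (S : Set A) : ℕ :=
  sInf { n : ℕ | ∃ k, 1 ≤ k ∧ ∃ j, j < l ^ k ∧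
    ((fun a => substIter θ l k a j) '' S).ncard = n }

/-- The column number `c(θ)` of a substitution of constant length `l`. -/
noncomputable def columnNumber {A : Type*} (θ : A → ℕ → A) (l : ℕ) : ℕ :=
  columnNumberOn θ l Set.univ

/-- The one-sided fixed point `u` of `θ` obtained by iterating `θ` at a letter `a₀`
with `θ(a₀)_0 = a₀`: `u n = θ^k(a₀)_n` for any `k` with `n < l^k`. -/
def substFixedPoint {A : Type*} (θ : A → ℕ → A) (l : ℕ) (a₀ : A) : ℕ → A :=
  fun n => substIter θ l (n + 1) a₀ n

/-- The height `h(θ)`: the largest `m ≥ 1` coprime to `l` dividing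
`gcd {r ≥ 1 : u[r] = u[0]}`, i.e. dividing every return time of `u[0]`. -/
noncomputable def substHeight {A : Type*} (θ : A → ℕ → A) (l : ℕ) (a₀ : A) : ℕ :=
  sSup { m : ℕ | 1 ≤ m ∧ Nat.Coprime m l ∧
    ∀ r : ℕ, 1 ≤ r → substFixedPoint θ l a₀ r = substFixedPoint θ l a₀ 0 → m ∣ r }

/-- The subshift `X_θ ⊆ A^ℤ`: all `x` each of whose finite blocks occurs in some
`θ^k(a)`. -/
def subshift {A : Type*} (θ : A → ℕ → A) (l : ℕ) : Set (ℤ → A) :=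
  { x | ∀ (i : ℤ) (n : ℕ), ∃ k, 1 ≤ k ∧ ∃ a : A, ∃ j : ℕ, j + n ≤ l ^ k ∧
      ∀ m : ℕ, m < n → x (i + (m : ℤ)) = substIter θ l k a (j + m) }

/-- The subshift `X_x ⊆ A^ℤ` generated by a one-sided sequence `x ∈ A^ℕ`: all `z`
each of whose finite blocks occurs in `x`. -/
def subshiftOf {A : Type*} (x : ℕ → A) : Set (ℤ → A) :=
  { z | ∀ (i : ℤ) (n : ℕ), ∃ j : ℕ, ∀ m : ℕ, m < n → z (i + (m : ℤ)) = x (j + m) }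

/-- The left shift on `A^ℤ`. -/
def shift {A : Type*} (x : ℤ → A) : ℤ → A := fun n => x (n + 1)

/-- A bounded arithmetic function. -/
def BoundedSeq (u : ℕ → ℂ) : Prop := ∃ C : ℝ, ∀ n, ‖u n‖ ≤ C

/-- A multiplicative arithmetic function: `u(mn) = u(m)u(n)` for coprime `m, n`. -/
def MultiplicativeSeq (u : ℕ → ℂ) : Prop :=
  ∀ m n : ℕ, Nat.Coprime m n → u (m * n) = u m * u n

/-- An aperiodic arithmetic function: zero mean along every arithmetic progression. -/
def AperiodicSeq (u : ℕ → ℂ) : Prop :=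
  ∀ a b : ℕ, 1 ≤ a →
    Tendsto (fun N : ℕ => (N : ℂ)⁻¹ * ∑ n ∈ Finset.Icc 1 N, u (a * n + b)) atTop (nhds 0)

/-- The Weyl pseudo-metric
`d_W(x,y) = limsup_N sup_{ℓ ≥ 1} (1/N)·#{ℓ ≤ n < ℓ+N : x n ≠ y n}`. -/
noncomputable def weylDist {B : Type*} (x y : ℕ → B) : ℝ :=
  limsup (fun N : ℕ =>
    ⨆ ℓ : ℕ, ⨆ _ : 1 ≤ ℓ,
      (({ n : ℕ | ℓ ≤ n ∧ n < ℓ + N ∧ x n ≠ y n }.ncard : ℝ) / N)) atTop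

/-- A periodic sequence. -/
def IsPeriodicSeq {B : Type*} (v : ℕ → B) : Prop :=
  ∃ p, 1 ≤ p ∧ ∀ n, v (n + p) = v n

/-- Weyl rational almost periodicity: a `d_W`-limit of periodic sequences. -/
def WRAPSeq {B : Type*} (x : ℕ → B) : Prop :=
  ∀ ε : ℝ, 0 < ε → ∃ v : ℕ → B, IsPeriodicSeq v ∧ weylDist x v < ε

/-- The family `𝒳(θ)` of column sets realizing the column number of `θ`. -/
noncomputable def columnSets {A : Type*} (θ : A → ℕ → A) (l : ℕ) : Set (Set A) :=
  { M | (∃ k, 1 ≤ k ∧ ∃ j, j < l ^ k ∧ M = (fun a => substIter θ l k a j) '' Set.univ) ∧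
        M.ncard = columnNumber θ l }

/-- The synchronizing part `~θ` of `θ`, as a substitution on subsets of the alphabet:
`~θ(M)_j = {θ(a)_j : a ∈ M}`. -/
def synchPart {A : Type*} (θ : A → ℕ → A) : Set A → ℕ → Set A :=
  fun M j => (fun a => θ a j) '' M

/-- The joining `θ ∨ ζ` of two substitutions of the same constant length. -/
def joinSub {A B : Type*} (θ : A → ℕ → A) (ζ : B → ℕ → B) : A × B → ℕ → A × B :=
  fun p j => (θ p.1 j, ζ p.2 j)

/-- The pure base `θ^{(h)}` of `θ`: a substitution of length `l` on blocks of length `h`,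
`θ^{(h)}(w)_j = θ(w)[jh, (j+1)h−1]`, where `θ(w)` is the concatenation
`θ(w_0)…θ(w_{h-1})`. -/
def pureBase {A : Type*} (θ : A → ℕ → A) (l h : ℕ) : (Fin h → A) → ℕ → (Fin h → A) :=
  fun w j i => θ (w ⟨(j * h + i.val) / l % h, Nat.mod_lt _ i.pos⟩) ((j * h + i.val) % l)

/-- Iterated cocycle `σ^{(k)}`, with `σ^{(1)} = σ` and
`σ^{(k+1)}(M, j₁·l + j₂) = σ^{(k)}(M, j₁) ∘ σ(~θ^k(M)_{j₁}, j₂)`. -/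
def sigmaIter {X : Type*} {c : ℕ} (tilde : X → ℕ → X)
    (σ : X → ℕ → Equiv.Perm (Fin c)) (l : ℕ) : ℕ → X → ℕ → Equiv.Perm (Fin c)
  | 0, _, _ => 1
  | k + 1, M, j =>
      sigmaIter tilde σ l k M (j / l) * σ (substIter tilde l k M (j / l)) (j % l)

/-- The group extension substitution `Θ̂(g, M)_j = (g ∘ σ(M,j), ~θ(M)_j)`. -/
def hatTheta {X : Type*} {c : ℕ} (tilde : X → ℕ → X)
    (σ : X → ℕ → Equiv.Perm (Fin c)) : Equiv.Perm (Fin c) × X → ℕ → Equiv.Perm (Fin c) × X :=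
  fun p j => (p.1 * σ p.2 j, tilde p.2 j)

/-- The group `G` generated by the cocycle values `σ(M, j)`, `M ∈ 𝒳`, `j < l`. -/
def cocycleGroup {X : Type*} {c : ℕ} (σ : X → ℕ → Equiv.Perm (Fin c)) (l : ℕ) :
    Subgroup (Equiv.Perm (Fin c)) :=
  Subgroup.closure { g | ∃ M : X, ∃ j, j < l ∧ g = σ M j }


section AuxJoinSynch

lemma substIter_add' {A : Type*} (θ : A → ℕ → A) (l : ℕ) (k₁ k₂ : ℕ) (a : A) (j : ℕ) :
    substIter θ l (k₁ + k₂) a j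
      = substIter θ l k₂ (substIter θ l k₁ a (j / l ^ k₂)) (j % l ^ k₂) := by
  induction k₂ generalizing j with
  | zero => simp [substIter]
  | succ k ih =>
      have e1 : substIter θ l (k₁ + (k + 1)) a j
          = θ (substIter θ l (k₁ + k) a (j / l)) (j % l) := rfl
      have e2 : substIter θ l (k + 1) (substIter θ l k₁ a (j / l ^ (k + 1))) (j % l ^ (k + 1))
          = θ (substIter θ l k (substIter θ l k₁ a (j / l ^ (k + 1))) (j % l ^ (k + 1) / l))
              (j % l ^ (k + 1) % l) := rfl
      have e3 : j / l / l ^ k = j / l ^ (k + 1) := by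
        rw [Nat.div_div_eq_div_mul, ← pow_succ']
      have e4 : j / l % l ^ k = j % l ^ (k + 1) / l := by
        rw [show (l : ℕ) ^ (k + 1) = l * l ^ k from pow_succ' l k,
          Nat.mod_mul_right_div_self]
      have e5 : j % l ^ (k + 1) % l = j % l :=
        Nat.mod_mod_of_dvd j (dvd_pow_self l (Nat.succ_ne_zero k))
      rw [e1, e2, ih, e3, e4, e5]

lemma substIter_mul_add' {A : Type*} (θ : A → ℕ → A) {l : ℕ} (hl : 0 < l)
    (k₁ k₂ : ℕ) (a : A) (j₁ j₂ : ℕ) (h : j₂ < l ^ k₂) :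
    substIter θ l (k₁ + k₂) a (j₁ * l ^ k₂ + j₂)
      = substIter θ l k₂ (substIter θ l k₁ a j₁) j₂ := by
  rw [substIter_add']
  have hp : 0 < l ^ k₂ := Nat.pow_pos hl
  have h1 : (j₁ * l ^ k₂ + j₂) / l ^ k₂ = j₁ := by
    rw [mul_comm, Nat.mul_add_div hp, Nat.div_eq_of_lt h, Nat.add_zero]
  have h2 : (j₁ * l ^ k₂ + j₂) % l ^ k₂ = j₂ := by
    rw [mul_comm, Nat.mul_add_mod, Nat.mod_eq_of_lt h]
  rw [h1, h2]

lemma index_lt' {l : ℕ} {k₁ k₂ j₁ j₂ : ℕ} (h₁ : j₁ < l ^ k₁) (h₂ : j₂ < l ^ k₂) :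
    j₁ * l ^ k₂ + j₂ < l ^ (k₁ + k₂) := by
  have h3 : (j₁ + 1) * l ^ k₂ ≤ l ^ k₁ * l ^ k₂ := Nat.mul_le_mul h₁ (le_refl _)
  have e : (j₁ + 1) * l ^ k₂ = j₁ * l ^ k₂ + l ^ k₂ := by ring
  rw [pow_add]
  omega

lemma substIter_join' {A B : Type*} (θ : A → ℕ → A) (ζ : B → ℕ → B) (l : ℕ)
    (k : ℕ) (a : A) (b : B) (j : ℕ) :
    substIter (joinSub θ ζ) l k (a, b) j = (substIter θ l k a j, substIter ζ l k b j) := by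
  induction k generalizing j with
  | zero => rfl
  | succ k ih =>
      show joinSub θ ζ (substIter (joinSub θ ζ) l k (a, b) (j / l)) (j % l) = _
      rw [ih]
      rfl

lemma substIter_synch' {A : Type*} (θ : A → ℕ → A) (l : ℕ) (k : ℕ) (M : Set A) (j : ℕ) :
    substIter (synchPart θ) l k M j = (fun a => substIter θ l k a j) '' M := by
  induction k generalizing j with
  | zero => simp [substIter]
  | succ k ih =>
      show synchPart θ (substIter (synchPart θ) l k M (j / l)) (j % l) = _
      rw [ih, synchPart, ← Set.image_comp]
      rfl

lemma lt_pow_succ_self' {l : ℕ} (hl : 2 ≤ l) (m : ℕ) : m < l ^ (m + 1) := by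
  calc m < 2 ^ m := Nat.lt_two_pow_self
  _ ≤ 2 ^ (m + 1) := Nat.pow_le_pow_right (by omega) (by omega)
  _ ≤ l ^ (m + 1) := Nat.pow_le_pow_left hl _

lemma substIter_fix' {A : Type*} {θ : A → ℕ → A} {l : ℕ} (hl : 2 ≤ l) {a₀ : A}
    (ha₀ : θ a₀ 0 = a₀) {k n : ℕ} (hn : n < l ^ k) :
    substIter θ l k a₀ n = substFixedPoint θ l a₀ n := by
  have hstep : ∀ k n : ℕ, n < l ^ k → substIter θ l (k + 1) a₀ n = substIter θ l k a₀ n := by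
    intro k n hn
    have h0 : substIter θ l 1 a₀ 0 = a₀ := by
      show θ (substIter θ l 0 a₀ (0 / l)) (0 % l) = a₀
      simp [substIter, ha₀]
    rw [show k + 1 = 1 + k from Nat.add_comm k 1, substIter_add',
      Nat.div_eq_of_lt hn, Nat.mod_eq_of_lt hn, h0]
  have hup : ∀ t k n : ℕ, n < l ^ k → substIter θ l (k + t) a₀ n = substIter θ l k a₀ n := by
    intro t
    induction t with
    | zero => intro k n _; rfl
    | succ t ih =>
        intro k n hn
        have hn' : n < l ^ (k + t) :=
          lt_of_lt_of_le hn (Nat.pow_le_pow_right (by omega) (by omega))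
        rw [show k + (t + 1) = (k + t) + 1 from rfl, hstep _ _ hn', ih k n hn]
  have hself : n < l ^ (n + 1) := lt_pow_succ_self' hl n
  rcases le_total k (n + 1) with h | h
  · rw [substFixedPoint, show n + 1 = k + (n + 1 - k) from by omega, hup _ _ _ hn]
  · rw [substFixedPoint, show k = (n + 1) + (k - (n + 1)) from by omega, hup _ _ _ hself]

lemma substFixedPoint_rec' {A : Type*} {θ : A → ℕ → A} {l : ℕ} (hl : 2 ≤ l) {a₀ : A}
    (ha₀ : θ a₀ 0 = a₀) (n : ℕ) {k s : ℕ} (hs : s < l ^ k) :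
    substFixedPoint θ l a₀ (n * l ^ k + s)
      = substIter θ l k (substFixedPoint θ l a₀ n) s := by
  have hb : n * l ^ k + s < l ^ ((n + 1) + k) := by
    have h1 : n + 1 ≤ l ^ (n + 1) := lt_pow_succ_self' hl n
    calc n * l ^ k + s < n * l ^ k + l ^ k := by omega
    _ = (n + 1) * l ^ k := by ring
    _ ≤ l ^ (n + 1) * l ^ k := Nat.mul_le_mul h1 (le_refl _)
    _ = l ^ ((n + 1) + k) := (pow_add l _ _).symm
  rw [← substIter_fix' hl ha₀ hb, substIter_mul_add' θ (by omega) _ _ _ _ _ hs,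
    substIter_fix' hl ha₀ (lt_pow_succ_self' hl n)]

end AuxJoinSynch

/-- The joining `Θ = θ ∨ ~θ` of a primitive substitution `θ` with its
synchronizing part, on the alphabet `{(a, M) : M ∈ 𝒳(θ), a ∈ M}`, is primitive; and if
`θ(a₀)_0 = a₀`, `~θ(M₀)_0 = M₀`, `a₀ ∈ M₀ ∈ 𝒳(θ)`, then `h(Θ) = h(θ)`. -/
theorem join_with_synchronizing_primitive_and_height
    {A : Type*} [Finite A] (l : ℕ) (hl : 2 ≤ l)
    (θ : A → ℕ → A) (hθ : SubstPrimitive θ l)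
    (a₀ : A) (M₀ : Set A) (hM₀ : M₀ ∈ columnSets θ l) (ha₀M₀ : a₀ ∈ M₀)
    (ha₀ : θ a₀ 0 = a₀) (hfixM₀ : synchPart θ M₀ 0 = M₀) :
    SubstPrimitiveOn (joinSub θ (synchPart θ)) l
        { p : A × Set A | p.2 ∈ columnSets θ l ∧ p.1 ∈ p.2 } ∧
    substHeight (joinSub θ (synchPart θ)) l (a₀, M₀) = substHeight θ l a₀ := by
    classical
  have hl0 : 0 < l := by omega
  have hcn : columnNumber θ l = sInf { n : ℕ | ∃ k, 1 ≤ k ∧ ∃ j, j < l ^ k ∧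
      ((fun a => substIter θ l k a j) '' Set.univ).ncard = n } := rfl
  have hc_le : ∀ k, 1 ≤ k → ∀ j, j < l ^ k →
      columnNumber θ l ≤ ((fun a => substIter θ l k a j) '' Set.univ).ncard := by
    intro k hk j hj
    rw [hcn]
    exact Nat.sInf_le ⟨k, hk, j, hj, rfl⟩
  have hTne : { n : ℕ | ∃ k, 1 ≤ k ∧ ∃ j, j < l ^ k ∧
      ((fun a => substIter θ l k a j) '' Set.univ).ncard = n }.Nonempty :=
    ⟨_, 1, le_refl 1, 0, by simpa using hl0, rfl⟩
  -- stability of the family of minimal column sets under further columns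
  have hstab : ∀ M ∈ columnSets θ l, ∀ k j, j < l ^ k →
      (fun a => substIter θ l k a j) '' M ∈ columnSets θ l := by
    intro M hM k j hj
    obtain ⟨⟨kM, hkM, jM, hjM, hMeq⟩, hMn⟩ := hM
    have hrepr2 : (fun a => substIter θ l k a j) '' M
        = (fun a => substIter θ l (kM + k) a (jM * l ^ k + j)) '' Set.univ := by
      have hfun : (fun x => substIter θ l (kM + k) x (jM * l ^ k + j))
          = (fun x => substIter θ l k x j) ∘ (fun x => substIter θ l kM x jM) :=
        funext fun x => substIter_mul_add' θ hl0 kM k x jM j hj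
      rw [hMeq, ← Set.image_comp, ← hfun]
    have hjj : jM * l ^ k + j < l ^ (kM + k) := index_lt' hjM hj
    refine ⟨⟨kM + k, by omega, jM * l ^ k + j, hjj, hrepr2⟩, ?_⟩
    refine le_antisymm ((Set.ncard_image_le (Set.toFinite M)).trans hMn.le) ?_
    rw [hrepr2]
    exact hc_le (kM + k) (by omega) _ hjj
  -- a minimal column
  obtain ⟨k₀, hk₀, j₀, hj₀, hn₀⟩ := Nat.sInf_mem hTne
  have hn₀' : ((fun a => substIter θ l k₀ a j₀) '' Set.univ).ncard = columnNumber θ l := by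
    rw [hcn]; exact hn₀
  have hMstar : (fun a => substIter θ l k₀ a j₀) '' Set.univ ∈ columnSets θ l :=
    ⟨⟨k₀, hk₀, j₀, hj₀, rfl⟩, hn₀'⟩
  -- the minimal column collapses every element of 𝒳 onto the same set
  have hcol0 : ∀ N ∈ columnSets θ l,
      (fun a => substIter θ l k₀ a j₀) '' N
        = (fun a => substIter θ l k₀ a j₀) '' Set.univ := by
    intro N hN
    refine Set.eq_of_subset_of_ncard_le (Set.image_mono (Set.subset_univ N)) ?_
      (Set.toFinite _)
    rw [hn₀', (hstab N hN k₀ j₀ hj₀).2]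
  -- representation of every element of 𝒳 at a common level K₁
  obtain ⟨kp, hkp, hp⟩ := hθ
  have hXfin : (columnSets θ l).Finite := Set.toFinite _
  have hrepmem : ∀ N ∈ columnSets θ l, ∃ k, 1 ≤ k ∧ ∃ j, j < l ^ k ∧
      N = (fun a => substIter θ l k a j) '' Set.univ := fun N hN => hN.1
  choose! lev hlev jdx hjdx hrepr using hrepmem
  obtain ⟨K₁, hK₁⟩ := (hXfin.image lev).bddAbove
  have hK₁' : ∀ N ∈ columnSets θ l, lev N ≤ K₁ := fun N hN =>
    hK₁ (Set.mem_image_of_mem lev hN)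
  have hK₁pos : 1 ≤ K₁ := le_trans (hlev M₀ hM₀) (hK₁' M₀ hM₀)
  have hrepK : ∀ N ∈ columnSets θ l, ∃ j, j < l ^ K₁ ∧
      N = (fun a => substIter θ l K₁ a j) '' Set.univ := by
    intro N hN
    have ht : (K₁ - lev N) + lev N = K₁ := by have := hK₁' N hN; omega
    refine ⟨jdx N, lt_of_lt_of_le (hjdx N hN)
      (Nat.pow_le_pow_right (by omega) (hK₁' N hN)), ?_⟩
    have himg : (fun a => substIter θ l K₁ a (jdx N)) '' Set.univ
        = (fun a => substIter θ l (lev N) a (jdx N))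
            '' ((fun a => substIter θ l (K₁ - lev N) a 0) '' Set.univ) := by
      have hfun : (fun x => substIter θ l ((K₁ - lev N) + lev N) x (jdx N))
          = (fun x => substIter θ l (lev N) x (jdx N))
              ∘ (fun x => substIter θ l (K₁ - lev N) x 0) := by
        funext x
        have := substIter_mul_add' θ hl0 (K₁ - lev N) (lev N) x 0 (jdx N) (hjdx N hN)
        simpa using this
      rw [← Set.image_comp, ← hfun, ht]
    have hsub : (fun a => substIter θ l K₁ a (jdx N)) '' Set.univ ⊆ N := by
      rw [himg]
      exact (Set.image_mono (Set.subset_univ _)).trans (hrepr N hN).symm.subset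
    refine (Set.eq_of_subset_of_ncard_le hsub ?_ (Set.toFinite _)).symm
    rw [hN.2]
    exact hc_le K₁ hK₁pos _ (lt_of_lt_of_le (hjdx N hN)
      (Nat.pow_le_pow_right (by omega) (hK₁' N hN)))
  -- primitivity of the joining
  have hprim_on : SubstPrimitiveOn (joinSub θ (synchPart θ)) l
      { p : A × Set A | p.2 ∈ columnSets θ l ∧ p.1 ∈ p.2 } := by
    refine ⟨kp + K₁, by omega, ?_⟩
    rintro ⟨a, M⟩ ⟨hM𝒳, haM⟩ ⟨b, N⟩ ⟨hN𝒳, hbN⟩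
    obtain ⟨j₂, hj₂, hNrep⟩ := hrepK N hN𝒳
    rw [hNrep] at hbN
    obtain ⟨b', -, hb'⟩ := hbN
    obtain ⟨j₁, hj₁, hab'⟩ := hp a b'
    refine ⟨j₁ * l ^ K₁ + j₂, index_lt' hj₁ hj₂, ?_⟩
    rw [substIter_join']
    have h1 : substIter θ l (kp + K₁) a (j₁ * l ^ K₁ + j₂) = b := by
      rw [substIter_mul_add' θ hl0 _ _ _ _ _ hj₂, hab']
      exact hb'
    have h2 : substIter (synchPart θ) l (kp + K₁) M (j₁ * l ^ K₁ + j₂) = N := by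
      rw [substIter_synch']
      have hsplit : (fun x => substIter θ l (kp + K₁) x (j₁ * l ^ K₁ + j₂)) '' M
          = (fun x => substIter θ l K₁ x j₂) '' ((fun x => substIter θ l kp x j₁) '' M) := by
        have hfun : (fun x => substIter θ l (kp + K₁) x (j₁ * l ^ K₁ + j₂))
            = (fun x => substIter θ l K₁ x j₂) ∘ (fun x => substIter θ l kp x j₁) :=
          funext fun x => substIter_mul_add' θ hl0 _ _ _ _ _ hj₂
        rw [← Set.image_comp, ← hfun]
      rw [hsplit]
      have hM' := hstab M hM𝒳 kp j₁ hj₁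
      have hmem := hstab _ hM' K₁ j₂ hj₂
      refine Set.eq_of_subset_of_ncard_le
        ((Set.image_mono (Set.subset_univ _)).trans hNrep.symm.subset) ?_
        (Set.toFinite _)
      rw [hN𝒳.2, hmem.2]
    rw [h1, h2]
  refine ⟨hprim_on, ?_⟩
  -- height part
  have huθ0 : substFixedPoint θ l a₀ 0 = a₀ := by
    show θ (substIter θ l 0 a₀ (0 / l)) (0 % l) = a₀
    simp [substIter, ha₀]
  have hΘfix : joinSub θ (synchPart θ) (a₀, M₀) 0 = (a₀, M₀) := by
    simp [joinSub, ha₀, hfixM₀]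
  have huΘ0 : substFixedPoint (joinSub θ (synchPart θ)) l (a₀, M₀) 0 = (a₀, M₀) := by
    show joinSub θ (synchPart θ)
      (substIter (joinSub θ (synchPart θ)) l 0 (a₀, M₀) (0 / l)) (0 % l) = (a₀, M₀)
    simpa [substIter] using hΘfix
  have hjoin_fp : ∀ n, substFixedPoint (joinSub θ (synchPart θ)) l (a₀, M₀) n
      = (substFixedPoint θ l a₀ n, substIter (synchPart θ) l (n + 1) M₀ n) := fun n =>
    substIter_join' θ (synchPart θ) l (n + 1) a₀ M₀ n
  refine congrArg sSup (Set.ext fun m => ?_)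
  constructor
  · -- hard direction: from Θ-returns to θ-returns
    rintro ⟨hm1, hm2, hm3⟩
    refine ⟨hm1, hm2, ?_⟩
    intro r hr hret
    rw [huθ0] at hret
    obtain ⟨K, hK1, hKall⟩ := hprim_on
    have hastar : substIter θ l k₀ a₀ j₀ ∈ (fun a => substIter θ l k₀ a j₀) '' Set.univ :=
      ⟨a₀, Set.mem_univ a₀, rfl⟩
    obtain ⟨j₁, hj₁K, hj₁eq⟩ := hKall (substIter θ l k₀ a₀ j₀,
      (fun a => substIter θ l k₀ a j₀) '' Set.univ) ⟨hMstar, hastar⟩ (a₀, M₀) ⟨hM₀, ha₀M₀⟩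
    rw [substIter_join'] at hj₁eq
    have hlet : substIter θ l K (substIter θ l k₀ a₀ j₀) j₁ = a₀ :=
      congrArg Prod.fst hj₁eq
    have hsetp : substIter (synchPart θ) l K
        ((fun a => substIter θ l k₀ a j₀) '' Set.univ) j₁ = M₀ :=
      congrArg Prod.snd hj₁eq
    rw [substIter_synch'] at hsetp
    have hjlt : j₀ * l ^ K + j₁ < l ^ (k₀ + K) := index_lt' hj₀ hj₁K
    have hkey : ∀ N ∈ columnSets θ l, a₀ ∈ N →
        substIter (joinSub θ (synchPart θ)) l (k₀ + K) (a₀, N) (j₀ * l ^ K + j₁)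
          = (a₀, M₀) := by
      intro N hN haN
      rw [substIter_join']
      have h1 : substIter θ l (k₀ + K) a₀ (j₀ * l ^ K + j₁) = a₀ := by
        rw [substIter_mul_add' θ hl0 _ _ _ _ _ hj₁K]
        exact hlet
      have h2 : substIter (synchPart θ) l (k₀ + K) N (j₀ * l ^ K + j₁) = M₀ := by
        rw [substIter_synch']
        have hsplit : (fun x => substIter θ l (k₀ + K) x (j₀ * l ^ K + j₁)) '' N
            = (fun x => substIter θ l K x j₁) '' ((fun x => substIter θ l k₀ x j₀) '' N) := by
          have hfun : (fun x => substIter θ l (k₀ + K) x (j₀ * l ^ K + j₁))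
              = (fun x => substIter θ l K x j₁) ∘ (fun x => substIter θ l k₀ x j₀) :=
            funext fun x => substIter_mul_add' θ hl0 _ _ _ _ _ hj₁K
          rw [← Set.image_comp, ← hfun]
        rw [hsplit, hcol0 N hN]
        exact hsetp
      rw [h1, h2]
    have hj_dvd : m ∣ j₀ * l ^ K + j₁ := by
      rcases Nat.eq_zero_or_pos (j₀ * l ^ K + j₁) with h0 | hpos
      · simp [h0]
      · refine hm3 _ hpos ?_
        have hrec := substFixedPoint_rec' hl hΘfix 0 hjlt
        simp only [Nat.zero_mul, Nat.zero_add] at hrec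
        rw [hrec, huΘ0, hkey M₀ hM₀ ha₀M₀]
    have hVr_mem : substIter (synchPart θ) l (r + 1) M₀ r ∈ columnSets θ l := by
      rw [substIter_synch']
      exact hstab M₀ hM₀ (r + 1) r (lt_pow_succ_self' hl r)
    have ha₀Vr : a₀ ∈ substIter (synchPart θ) l (r + 1) M₀ r := by
      rw [substIter_synch']
      exact ⟨a₀, ha₀M₀, hret⟩
    have hret2 : substFixedPoint (joinSub θ (synchPart θ)) l (a₀, M₀)
          (r * l ^ (k₀ + K) + (j₀ * l ^ K + j₁))
        = substFixedPoint (joinSub θ (synchPart θ)) l (a₀, M₀) 0 := by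
      rw [substFixedPoint_rec' hl hΘfix r hjlt, hjoin_fp r, hret, huΘ0]
      exact hkey _ hVr_mem ha₀Vr
    have h1le : 1 ≤ r * l ^ (k₀ + K) + (j₀ * l ^ K + j₁) := by
      have : 0 < r * l ^ (k₀ + K) := Nat.mul_pos hr (Nat.pow_pos hl0)
      omega
    have hdvd1 : m ∣ r * l ^ (k₀ + K) + (j₀ * l ^ K + j₁) := hm3 _ h1le hret2
    have hdvd2 : m ∣ r * l ^ (k₀ + K) := by
      have := Nat.dvd_sub hdvd1 hj_dvd
      simpa using this
    exact (Nat.Coprime.pow_right (k₀ + K) hm2).dvd_of_dvd_mul_right hdvd2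
  · -- easy direction: Θ-returns are θ-returns
    rintro ⟨hm1, hm2, hm3⟩
    refine ⟨hm1, hm2, ?_⟩
    intro r hr hret
    rw [hjoin_fp r, hjoin_fp 0] at hret
    exact hm3 r hr (congrArg Prod.fst hret)
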